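/- Let q be an odd prime, G = GL₂(ℤ/qℤ), and B ≤ G the subgroup of upper-triangular matrices. Let A be an abelian group of odd order which is a quotient of (ℤ/qℤ)*, and let α : B → A be the homomorphism sending the matrix with diagonal entries a, d to the image of a/d in A. Then the transfer (corestriction) map H¹(B, A) → H¹(G, A) (with trivial actions) sends the class of α to zero; equivalently, the transfer homomorphism Ver : G^{ab} → B^{ab} composed with α, i.e. α ∘ Ver : G → A, is the trivial homomorphism. -/

import Mathlib

namespace Stmt15Aux

variable {q : ℕ}

/-- upper elementary matrix as a unit -/
def Eu (t : ZMod q) : Matrix.GeneralLinearGroup (Fin 2) (ZMod q) :=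
  ⟨!![1, t; 0, 1], !![1, -t; 0, 1],
    by simp [Matrix.mul_fin_two, Matrix.one_fin_two],
    by simp [Matrix.mul_fin_two, Matrix.one_fin_two]⟩

/-- lower elementary matrix as a unit -/
def Fu (t : ZMod q) : Matrix.GeneralLinearGroup (Fin 2) (ZMod q) :=
  ⟨!![1, 0; t, 1], !![1, 0; -t, 1],
    by simp [Matrix.mul_fin_two, Matrix.one_fin_two],
    by simp [Matrix.mul_fin_two, Matrix.one_fin_two]⟩

/-- diagonal matrix as a unit -/
def Du (a d : (ZMod q)ˣ) : Matrix.GeneralLinearGroup (Fin 2) (ZMod q) :=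
  ⟨!![(a : ZMod q), 0; 0, d], !![((a⁻¹ : (ZMod q)ˣ) : ZMod q), 0; 0, (d⁻¹ : (ZMod q)ˣ)],
    by simp [Matrix.mul_fin_two, Matrix.one_fin_two],
    by simp [Matrix.mul_fin_two, Matrix.one_fin_two]⟩

/-- antidiagonal permutation matrix as a unit -/
def Pu : Matrix.GeneralLinearGroup (Fin 2) (ZMod q) :=
  ⟨!![0, 1; 1, 0], !![0, 1; 1, 0],
    by simp [Matrix.mul_fin_two, Matrix.one_fin_two],
    by simp [Matrix.mul_fin_two, Matrix.one_fin_two]⟩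

lemma Eu_mul (s t : ZMod q) : Eu s * Eu t = Eu (s + t) := by
  ext : 1
  show (!![1, s; 0, 1] : Matrix (Fin 2) (Fin 2) (ZMod q)) * !![1, t; 0, 1] = _
  simp [Matrix.mul_fin_two, Eu, add_comm]

lemma Du_mul (a d a' d' : (ZMod q)ˣ) : Du a d * Du a' d' = Du (a * a') (d * d') := by
  ext : 1
  show (!![(a : ZMod q), 0; 0, d] : Matrix (Fin 2) (Fin 2) (ZMod q)) * !![(a' : ZMod q), 0; 0, d'] = _
  simp [Matrix.mul_fin_two, Du]

lemma Du_one : (Du 1 1 : Matrix.GeneralLinearGroup (Fin 2) (ZMod q)) = 1 := by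
  ext : 1
  show (!![((1:(ZMod q)ˣ) : ZMod q), 0; 0, ((1:(ZMod q)ˣ) : ZMod q)]) = 1
  simp [Matrix.one_fin_two]

lemma Du_pow (l : (ZMod q)ˣ) (n : ℕ) : (Du l l) ^ n = Du (l ^ n) (l ^ n) := by
  induction n with
  | zero => simp [Du_one]
  | succ n ih => rw [pow_succ, ih, Du_mul, ← pow_succ]

lemma Du_Eu_comm (u : (ZMod q)ˣ) (t : ZMod q) :
    Du u 1 * Eu t = Eu ((u : ZMod q) * t) * Du u 1 := by
  ext : 1
  show (!![(u : ZMod q), 0; 0, 1] : Matrix (Fin 2) (Fin 2) (ZMod q)) * !![1, t; 0, 1]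
    = !![1, (u : ZMod q) * t; 0, 1] * !![(u : ZMod q), 0; 0, 1]
  simp [Matrix.mul_fin_two]

lemma Du_Fu_comm (u : (ZMod q)ˣ) (t : ZMod q) :
    Du 1 u * Fu t = Fu ((u : ZMod q) * t) * Du 1 u := by
  ext : 1
  show (!![(1 : ZMod q), 0; 0, u] : Matrix (Fin 2) (Fin 2) (ZMod q)) * !![1, 0; t, 1]
    = !![1, 0; (u : ZMod q) * t, 1] * !![(1 : ZMod q), 0; 0, u]
  simp [Matrix.mul_fin_two]

lemma Pu_Du_comm (a d : (ZMod q)ˣ) : Pu * Du a d = Du d a * Pu := by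
  ext : 1
  show (!![(0:ZMod q), 1; 1, 0]) * !![(a : ZMod q), 0; 0, d]
    = !![(d : ZMod q), 0; 0, a] * !![(0:ZMod q), 1; 1, 0]
  simp [Matrix.mul_fin_two]

lemma Du_central (l : (ZMod q)ˣ) (x : Matrix.GeneralLinearGroup (Fin 2) (ZMod q)) :
    x * Du l l = Du l l * x := by
  ext : 1
  show (x : Matrix (Fin 2) (Fin 2) (ZMod q)) * !![(l : ZMod q), 0; 0, l]
    = !![(l : ZMod q), 0; 0, l] * (x : Matrix (Fin 2) (Fin 2) (ZMod q))
  rw [Matrix.eta_fin_two (x : Matrix (Fin 2) (Fin 2) (ZMod q))]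
  simp [Matrix.mul_fin_two, mul_comm]

end Stmt15Aux

open Stmt15Aux in
/-- Let `q` be an odd prime, `G = GL₂(ℤ/q)`, `B` the Borel of upper-triangular
matrices, `A` an abelian group of odd order which is a quotient of `(ℤ/q)*`, and
`α : B → A` the homomorphism `diag(a,d) ↦ a/d`.  Then the transfer of `α` from `B`
to `G` is the trivial homomorphism. -/
theorem stmt15 (q : ℕ) [Fact (Nat.Prime q)] (hq : Odd q)
    (A : Type*) [CommGroup A] [Finite A] (hA : Odd (Nat.card A))
    (π : (ZMod q)ˣ →* A) (hπ : Function.Surjective π)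
    (B : Subgroup (Matrix.GeneralLinearGroup (Fin 2) (ZMod q)))
    (hB : ∀ g : Matrix.GeneralLinearGroup (Fin 2) (ZMod q),
      g ∈ B ↔ (g : Matrix (Fin 2) (Fin 2) (ZMod q)) 1 0 = 0)
    [B.FiniteIndex]
    (α : B →* A)
    (hα : ∀ (g : B) (a d : (ZMod q)ˣ),
      ((g : Matrix.GeneralLinearGroup (Fin 2) (ZMod q)) :
        Matrix (Fin 2) (Fin 2) (ZMod q)) 0 0 = a →
      ((g : Matrix.GeneralLinearGroup (Fin 2) (ZMod q)) :
        Matrix (Fin 2) (Fin 2) (ZMod q)) 1 1 = d →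
      α g = π (a * d⁻¹)) :
    α.transfer = 1 := by
  set f := α.transfer with hf
  -- a² = 1 implies a = 1 in A
  have sqkill : ∀ a : A, a * a = 1 → a = 1 := by
    intro a h
    have h1 : a ^ 2 = 1 := by rwa [sq]
    have h2 : orderOf a ∣ 2 := orderOf_dvd_of_pow_eq_one h1
    rcases (Nat.dvd_prime Nat.prime_two).mp h2 with h3 | h3
    · exact orderOf_eq_one_iff.mp h3
    · exfalso
      have h4 : (2 : ℕ) ∣ Nat.card A := h3 ▸ orderOf_dvd_natCard a
      have := hA
      rw [Nat.odd_iff] at this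
      omega
  -- 2 is a unit
  have h20 : (2 : ZMod q) ≠ 0 := by
    intro h
    have hq2 : (q : ℕ) ∣ 2 := by
      have h2 : ((2 : ℕ) : ZMod q) = 0 := by exact_mod_cast h
      exact (ZMod.natCast_eq_zero_iff ..).mp h2
    have hp : Nat.Prime q := Fact.out
    have : q = 2 := (Nat.prime_dvd_prime_iff_eq hp Nat.prime_two).mp hq2
    rw [this, Nat.odd_iff] at hq
    omega
  have h2u : IsUnit (2 : ZMod q) := Ne.isUnit h20
  -- conjugation invariance
  have frel : ∀ x y y' : Matrix.GeneralLinearGroup (Fin 2) (ZMod q),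
      x * y = y' * x → f y = f y' := by
    intro x y y' h
    have := congrArg f h
    rw [map_mul, map_mul, mul_comm (f y') (f x)] at this
    exact mul_left_cancel this
  -- f kills upper elementary matrices
  have hfE : ∀ t : ZMod q, f (Eu t) = 1 := by
    intro t
    have key : f (Eu ((h2u.unit : ZMod q) * t)) = f (Eu t) :=
      (frel (Du h2u.unit 1) _ _ (Du_Eu_comm h2u.unit t)).symm
    rw [h2u.unit_spec, two_mul, ← Eu_mul, map_mul] at key
    exact mul_left_cancel (key.trans (mul_one (f (Eu t))).symm)
  -- f kills lower elementary matrices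
  have hfF : ∀ t : ZMod q, f (Fu t) = 1 := by
    intro t
    have key : f (Fu ((h2u.unit : ZMod q) * t)) = f (Fu t) :=
      (frel (Du 1 h2u.unit) _ _ (Du_Fu_comm h2u.unit t)).symm
    have Fu_mul : ∀ s t : ZMod q, (Fu s * Fu t : Matrix.GeneralLinearGroup (Fin 2) (ZMod q)) = Fu (s + t) := by
      intro s t
      ext : 1
      show (!![1, 0; s, 1] : Matrix (Fin 2) (Fin 2) (ZMod q)) * !![1, 0; t, 1] = _
      simp [Matrix.mul_fin_two, Fu, add_comm]
    rw [h2u.unit_spec, two_mul, ← Fu_mul, map_mul] at key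
    exact mul_left_cancel (key.trans (mul_one (f (Fu t))).symm)
  -- f kills scalar matrices, via `transfer_eq_pow`
  have hscal : ∀ l : (ZMod q)ˣ, f (Du l l) = 1 := by
    intro l
    have key : ∀ (k : ℕ) (g₀ : Matrix.GeneralLinearGroup (Fin 2) (ZMod q)),
        g₀⁻¹ * (Du l l) ^ k * g₀ ∈ B → g₀⁻¹ * (Du l l) ^ k * g₀ = (Du l l) ^ k := by
      intro k g₀ _
      rw [Du_pow] at *
      rw [mul_assoc, ← Du_central (l ^ k) g₀, ← mul_assoc, inv_mul_cancel, one_mul]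
    rw [hf, MonoidHom.transfer_eq_pow α (Du l l) key]
    rw [hα _ (l ^ B.index) (l ^ B.index) ?h1 ?h2]
    · simp
    case h1 =>
      show ((Du l l ^ B.index : Matrix.GeneralLinearGroup (Fin 2) (ZMod q)) :
        Matrix (Fin 2) (Fin 2) (ZMod q)) 0 0 = _
      rw [Du_pow]
      show (!![((l ^ B.index : (ZMod q)ˣ) : ZMod q), 0; 0, ((l ^ B.index : (ZMod q)ˣ) : ZMod q)]) 0 0 = _
      simp
    case h2 =>
      show ((Du l l ^ B.index : Matrix.GeneralLinearGroup (Fin 2) (ZMod q)) :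
        Matrix (Fin 2) (Fin 2) (ZMod q)) 1 1 = _
      rw [Du_pow]
      show (!![((l ^ B.index : (ZMod q)ˣ) : ZMod q), 0; 0, ((l ^ B.index : (ZMod q)ˣ) : ZMod q)]) 1 1 = _
      simp
  -- f kills diagonal matrices
  have hD1 : ∀ u : (ZMod q)ˣ, f (Du u 1) = 1 := by
    intro u
    have e1 : f (Du u 1) = f (Du 1 u) := frel Pu _ _ (Pu_Du_comm u 1)
    apply sqkill
    calc f (Du u 1) * f (Du u 1) = f (Du u 1) * f (Du 1 u) := by rw [e1]
      _ = f (Du u 1 * Du 1 u) := (map_mul f _ _).symm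
      _ = f (Du u u) := by rw [Du_mul, mul_one, one_mul]
      _ = 1 := hscal u
  have hD : ∀ a d : (ZMod q)ˣ, f (Du a d) = 1 := by
    intro a d
    have : Du d d * Du (a * d⁻¹) 1 = (Du a d : Matrix.GeneralLinearGroup (Fin 2) (ZMod q)) := by
      rw [Du_mul, mul_one]
      rw [mul_comm a d⁻¹, mul_inv_cancel_left]
    rw [← this, map_mul, hscal, hD1, one_mul]
  -- main case : top-left entry nonzero
  have hmain0 : ∀ g : Matrix.GeneralLinearGroup (Fin 2) (ZMod q),
      (g : Matrix (Fin 2) (Fin 2) (ZMod q)) 0 0 ≠ 0 → f g = 1 := by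
    intro g h0
    set m : Matrix (Fin 2) (Fin 2) (ZMod q) := (g : Matrix (Fin 2) (Fin 2) (ZMod q)) with hm
    have hdet : m.det ≠ 0 := by
      have : IsUnit m.det := (Matrix.isUnit_iff_isUnit_det m).mp g.isUnit
      exact this.ne_zero
    set e : ZMod q := m 1 1 - m 1 0 * m 0 1 * (m 0 0)⁻¹ with he
    have hee : m 0 0 * e = m.det := by
      rw [Matrix.det_fin_two, he]
      field_simp
    have he0 : e ≠ 0 := by
      intro h
      rw [h, mul_zero] at hee
      exact hdet hee.symm
    have hau : IsUnit (m 0 0) := Ne.isUnit h0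
    have heu : IsUnit e := Ne.isUnit he0
    have hdec : g = Fu (m 1 0 * (m 0 0)⁻¹) * Du hau.unit heu.unit * Eu (m 0 1 * (m 0 0)⁻¹) := by
      ext : 1
      show m = (!![1, 0; m 1 0 * (m 0 0)⁻¹, 1] : Matrix (Fin 2) (Fin 2) (ZMod q)) *
        !![(hau.unit : ZMod q), 0; 0, (heu.unit : ZMod q)] * !![1, m 0 1 * (m 0 0)⁻¹; 0, 1]
      rw [hau.unit_spec, heu.unit_spec, he]
      ext i j
      fin_cases i <;> fin_cases j <;>
        simp [Matrix.mul_apply, Fin.sum_univ_two] <;> field_simp <;> ring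
    rw [hdec, map_mul, map_mul, hfF, hfE, hD, one_mul, mul_one]
  -- general case
  ext g
  show f g = 1
  by_cases h0 : (g : Matrix (Fin 2) (Fin 2) (ZMod q)) 0 0 ≠ 0
  · exact hmain0 g h0
  · push_neg at h0
    have hdet : ((g : Matrix (Fin 2) (Fin 2) (ZMod q))).det ≠ 0 := by
      have : IsUnit ((g : Matrix (Fin 2) (Fin 2) (ZMod q))).det :=
        (Matrix.isUnit_iff_isUnit_det _).mp g.isUnit
      exact this.ne_zero
    have h10 : (g : Matrix (Fin 2) (Fin 2) (ZMod q)) 1 0 ≠ 0 := by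
      intro h
      apply hdet
      rw [Matrix.det_fin_two, h0, h, zero_mul, mul_zero, sub_zero]
    have hEg : ((Eu 1 * g : Matrix.GeneralLinearGroup (Fin 2) (ZMod q)) :
        Matrix (Fin 2) (Fin 2) (ZMod q)) 0 0 ≠ 0 := by
      have : ((Eu 1 * g : Matrix.GeneralLinearGroup (Fin 2) (ZMod q)) :
          Matrix (Fin 2) (Fin 2) (ZMod q)) 0 0
          = (g : Matrix (Fin 2) (Fin 2) (ZMod q)) 0 0 + (g : Matrix (Fin 2) (Fin 2) (ZMod q)) 1 0 := by
        show ((!![1, 1; 0, 1] : Matrix (Fin 2) (Fin 2) (ZMod q)) *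
          (g : Matrix (Fin 2) (Fin 2) (ZMod q))) 0 0 = _
        simp [Matrix.mul_apply, Fin.sum_univ_two]
      rw [this, h0, zero_add]
      exact h10
    have := hmain0 _ hEg
    rw [map_mul, hfE, one_mul] at this
    exact this
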